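/- Pseudo-marginal Metropolis–Hastings targets the exact posterior: let Θ be a measurable space with σ-finite measure λ, π a probability measure on Θ with density f with respect to λ, and M a Markov kernel from Θ to [0,∞) such that ∫ w M(θ, dw) = 1 for every θ (unbiased nonnegative likelihood estimates). Then (i) π̃(dθ, dw) := w · π(dθ) M(θ, dw) is a probability measure on Θ × [0,∞) whose Θ-marginal is π; and (ii) if q(θ'|θ) is a jointly measurable Markov transition density with respect to λ, the Metropolis–Hastings kernel on Θ × [0,∞) which from state (θ, w) proposes (θ', w') from q(θ'|θ) λ(dθ') M(θ', dw') and accepts with probability min{1, (f(θ') w' q(θ|θ'))/(f(θ) w q(θ'|θ))} (accepting with probability 1 when the denominator is 0) is reversible with respect to π̃; in particular π̃ is an invariant distribution of this kernel for every choice of M. -/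

import Mathlib

open MeasureTheory ProbabilityTheory
open scoped ENNReal NNReal

/-- **Pseudo-marginal Metropolis–Hastings targets the exact posterior.**
Let `π` have density `f` w.r.t. a σ-finite measure `λ` on `Θ`, and let
`M` be a Markov kernel of nonnegative unbiased likelihood estimates
(`∫ w M(θ, dw) = 1` for all `θ`). Then (i) `π̃(dθ, dw) = w π(dθ) M(θ, dw)` is a
probability measure with `Θ`-marginal `π`; (ii) the Metropolis–Hastings kernel
`K` which from `(θ, w)` proposes `(θ', w') ~ q(θ'|θ) λ(dθ') M(θ', dw')` and
accepts with probability `min{1, f(θ')w'q(θ|θ') / (f(θ)wq(θ'|θ))}` (accepting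
with probability `1` when the denominator vanishes) is reversible with respect
to `π̃`; in particular `π̃` is invariant for `K`. -/
theorem pseudo_marginal_MH_exact {Θ : Type*} [MeasurableSpace Θ]
    (lam : Measure Θ) [SigmaFinite lam]
    (f : Θ → ℝ) (hf0 : ∀ θ, 0 ≤ f θ) (hfm : Measurable f)
    (π : Measure Θ) [IsProbabilityMeasure π]
    (hπ : π = lam.withDensity fun θ => ENNReal.ofReal (f θ))
    (M : Kernel Θ ℝ≥0) [IsMarkovKernel M]
    (hM : ∀ θ, ∫⁻ w, (w : ℝ≥0∞) ∂(M θ) = 1)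
    (q : Θ → Θ → ℝ) (hq0 : ∀ θ θ', 0 ≤ q θ θ') (hqm : Measurable (Function.uncurry q))
    (hq1 : ∀ θ, ∫⁻ θ', ENNReal.ofReal (q θ θ') ∂lam = 1)
    (πt : Measure (Θ × ℝ≥0))
    (hπt : πt = (π.compProd M).withDensity fun z => (z.2 : ℝ≥0∞))
    (α : Θ × ℝ≥0 → Θ × ℝ≥0 → ℝ≥0∞)
    (hα : α = fun z z' =>
      if f z.1 * (z.2 : ℝ) * q z.1 z'.1 = 0 then 1
      else min 1 (ENNReal.ofReal
        ((f z'.1 * (z'.2 : ℝ) * q z'.1 z.1) / (f z.1 * (z.2 : ℝ) * q z.1 z'.1))))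
    (prop : Θ × ℝ≥0 → Measure (Θ × ℝ≥0))
    (hprop : prop = fun z => (lam.withDensity fun θ' => ENNReal.ofReal (q z.1 θ')).compProd M)
    (K : Θ × ℝ≥0 → Measure (Θ × ℝ≥0))
    (hK : K = fun z => (prop z).withDensity (α z) +
      (1 - ∫⁻ z', α z z' ∂(prop z)) • Measure.dirac z) :
    IsProbabilityMeasure πt ∧
    πt.map Prod.fst = π ∧
    (∀ φ ψ : Θ × ℝ≥0 → ℝ, Measurable φ → Measurable ψ →
      (∀ Cφ Cψ : ℝ, (∀ z, |φ z| ≤ Cφ) → (∀ z, |ψ z| ≤ Cψ) →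
        ∫ z, φ z * ∫ z', ψ z' ∂(K z) ∂πt = ∫ z, ψ z * ∫ z', φ z' ∂(K z) ∂πt)) ∧
    (∀ B : Set (Θ × ℝ≥0), MeasurableSet B → ∫⁻ z, K z B ∂πt = πt B) := by
  -- basic measurability facts
  have hwm : Measurable fun z : Θ × ℝ≥0 => (z.2 : ℝ≥0∞) :=
    measurable_coe_nnreal_ennreal.comp measurable_snd
  have hρm : Measurable fun z : Θ × ℝ≥0 => ENNReal.ofReal (f z.1) * (z.2 : ℝ≥0∞) :=
    ((hfm.comp measurable_fst).ennreal_ofReal).mul hwm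
  have hqm2 : Measurable fun p : (Θ × ℝ≥0) × (Θ × ℝ≥0) => q p.1.1 p.2.1 :=
    hqm.comp ((measurable_fst.fst).prodMk (measurable_snd.fst))
  have hem : Measurable fun p : (Θ × ℝ≥0) × (Θ × ℝ≥0) =>
      f p.1.1 * (p.1.2 : ℝ) * q p.1.1 p.2.1 :=
    (((hfm.comp measurable_fst.fst).mul
      (measurable_coe_nnreal_real.comp measurable_fst.snd)).mul hqm2)
  have hem' : Measurable fun p : (Θ × ℝ≥0) × (Θ × ℝ≥0) =>
      f p.2.1 * (p.2.2 : ℝ) * q p.2.1 p.1.1 :=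
    (((hfm.comp measurable_snd.fst).mul
      (measurable_coe_nnreal_real.comp measurable_snd.snd)).mul
      (hqm.comp ((measurable_snd.fst).prodMk (measurable_fst.fst))))
  have hαm : Measurable fun p : (Θ × ℝ≥0) × (Θ × ℝ≥0) => α p.1 p.2 := by
    rw [hα]
    exact Measurable.ite (hem (measurableSet_singleton 0)) measurable_const
      (measurable_const.min ((hem'.div hem).ennreal_ofReal))
  have hα_right : ∀ z, Measurable (α z) := fun z => hαm.comp measurable_prodMk_left
  have hα1 : ∀ z z', α z z' ≤ 1 := by
    intro z z'
    rw [hα]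
    dsimp only
    split
    · exact le_rfl
    · exact min_le_left _ _
  have he0 : ∀ z z' : Θ × ℝ≥0, 0 ≤ f z.1 * (z.2 : ℝ) * q z.1 z'.1 := fun z z' =>
    mul_nonneg (mul_nonneg (hf0 _) z.2.coe_nonneg) (hq0 _ _)
  -- the symmetric detailed-balance density
  have hDsym : ∀ z z' : Θ × ℝ≥0,
      ENNReal.ofReal (f z.1 * (z.2 : ℝ) * q z.1 z'.1) * α z z'
        = ENNReal.ofReal (f z'.1 * (z'.2 : ℝ) * q z'.1 z.1) * α z' z := by
    intro z z'
    rw [hα]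
    dsimp only
    set a := f z.1 * (z.2 : ℝ) * q z.1 z'.1 with ha'
    set b := f z'.1 * (z'.2 : ℝ) * q z'.1 z.1 with hb'
    have ha0 : 0 ≤ a := he0 z z'
    have hb0 : 0 ≤ b := he0 z' z
    have hmono : Monotone ENNReal.ofReal := fun u v h => ENNReal.ofReal_le_ofReal h
    have hmin : ∀ y : ℝ, min (1 : ℝ≥0∞) (ENNReal.ofReal y) = ENNReal.ofReal (min 1 y) := by
      intro y
      rw [← ENNReal.ofReal_one, ← hmono.map_min]
    by_cases hA : a = 0 <;> by_cases hB : b = 0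
    · simp [hA, hB]
    · have hbpos : 0 < b := lt_of_le_of_ne hb0 (Ne.symm hB)
      rw [if_pos hA, if_neg hB, hA]
      simp only [ENNReal.ofReal_zero, zero_mul, zero_div]
      simp
    · have hapos : 0 < a := lt_of_le_of_ne ha0 (Ne.symm hA)
      rw [if_neg hA, if_pos hB, hB]
      simp only [ENNReal.ofReal_zero, zero_mul, zero_div]
      simp
    · have hapos : 0 < a := lt_of_le_of_ne ha0 (Ne.symm hA)
      have hbpos : 0 < b := lt_of_le_of_ne hb0 (Ne.symm hB)
      have key : ∀ x y : ℝ, 0 < x → 0 < y → x * min 1 (y / x) = min x y := by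
        intro x y hx hy
        rw [mul_min_of_nonneg _ _ hx.le, mul_one, mul_comm x (y / x),
          div_mul_cancel₀ _ hx.ne']
      rw [if_neg hA, if_neg hB, hmin (b / a), hmin (a / b),
        ← ENNReal.ofReal_mul ha0, ← ENNReal.ofReal_mul hb0,
        key a b hapos hbpos, key b a hbpos hapos, min_comm]

  -- lintegral formula for πt
  have hπtInt : ∀ F : Θ × ℝ≥0 → ℝ≥0∞, Measurable F →
      ∫⁻ z, F z ∂πt
        = ∫⁻ z, (ENNReal.ofReal (f z.1) * (z.2 : ℝ≥0∞)) * F z ∂(lam.compProd M) := by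
    intro F hF
    have h1 : Measurable fun z : Θ × ℝ≥0 => (z.2 : ℝ≥0∞) * F z := hwm.mul hF
    have h2 : Measurable fun z : Θ × ℝ≥0 =>
        (ENNReal.ofReal (f z.1) * (z.2 : ℝ≥0∞)) * F z := hρm.mul hF
    have hsec : ∀ θ, Measurable fun w : ℝ≥0 => (w : ℝ≥0∞) * F (θ, w) := fun θ =>
      measurable_coe_nnreal_ennreal.mul (hF.comp measurable_prodMk_left)
    have hker : Measurable fun θ => ∫⁻ w, (w : ℝ≥0∞) * F (θ, w) ∂M θ :=
      Measurable.lintegral_kernel_prod_right (f := fun (θ : Θ) (w : ℝ≥0) => (w : ℝ≥0∞) * F (θ, w)) h1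
    rw [hπt, lintegral_withDensity_eq_lintegral_mul _ hwm hF]
    simp only [Pi.mul_apply]
    rw [Measure.lintegral_compProd h1, hπ,
      lintegral_withDensity_eq_lintegral_mul _ hfm.ennreal_ofReal hker,
      Measure.lintegral_compProd h2]
    simp only [Pi.mul_apply]
    refine lintegral_congr fun θ => ?_
    rw [← lintegral_const_mul _ (hsec θ)]
    exact lintegral_congr fun w => (mul_assoc _ _ _).symm
  -- lintegral formula for the proposal
  have hpropInt : ∀ (z : Θ × ℝ≥0) (F : Θ × ℝ≥0 → ℝ≥0∞), Measurable F →
      ∫⁻ z', F z' ∂(prop z)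
        = ∫⁻ z', ENNReal.ofReal (q z.1 z'.1) * F z' ∂(lam.compProd M) := by
    intro z F hF
    have hqz : Measurable fun θ' => ENNReal.ofReal (q z.1 θ') :=
      (hqm.comp measurable_prodMk_left).ennreal_ofReal
    have hσF : Measurable fun z' : Θ × ℝ≥0 => ENNReal.ofReal (q z.1 z'.1) * F z' :=
      ((hqm.comp (measurable_const.prodMk measurable_fst)).ennreal_ofReal).mul hF
    have hker : Measurable fun θ' => ∫⁻ w', F (θ', w') ∂M θ' :=
      Measurable.lintegral_kernel_prod_right (f := fun (θ' : Θ) (w' : ℝ≥0) => F (θ', w')) hF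
    rw [hprop]
    dsimp only
    rw [Measure.lintegral_compProd hF,
      lintegral_withDensity_eq_lintegral_mul _ hqz hker,
      Measure.lintegral_compProd hσF]
    simp only [Pi.mul_apply]
    refine lintegral_congr fun θ' => ?_
    have hsec : Measurable fun w' : ℝ≥0 => F (θ', w') := hF.comp measurable_prodMk_left
    rw [← lintegral_const_mul _ hsec]
  -- the proposal is a probability measure
  have hpropProb : ∀ z, IsProbabilityMeasure (prop z) := by
    intro z
    haveI : IsProbabilityMeasure (lam.withDensity fun θ' => ENNReal.ofReal (q z.1 θ')) :=
      ⟨by rw [withDensity_apply _ MeasurableSet.univ, setLIntegral_univ, hq1]⟩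
    rw [hprop]
    infer_instance
  have hr1 : ∀ z, (∫⁻ z', α z z' ∂(prop z)) ≤ 1 := by
    intro z
    haveI := hpropProb z
    calc ∫⁻ z', α z z' ∂(prop z) ≤ ∫⁻ _, 1 ∂(prop z) := lintegral_mono fun z' => hα1 z z'
      _ = 1 := by rw [lintegral_one, measure_univ]
  -- lintegral formula for K
  have hKInt : ∀ (z) (F : Θ × ℝ≥0 → ℝ≥0∞), Measurable F →
      ∫⁻ z', F z' ∂(K z) = (∫⁻ z', α z z' * F z' ∂(prop z))
        + (1 - ∫⁻ z', α z z' ∂(prop z)) * F z := by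
    intro z F hF
    rw [hK]
    dsimp only
    rw [lintegral_add_measure, lintegral_smul_measure, lintegral_dirac' _ hF,
      lintegral_withDensity_eq_lintegral_mul _ (hα_right z) hF]
    simp only [Pi.mul_apply, smul_eq_mul]
  -- measurability of the partial acceptance integral
  have hPm : ∀ (h : Θ × ℝ≥0 → ℝ≥0∞), Measurable h →
      Measurable fun z => ∫⁻ z', α z z' * h z' ∂(prop z) := by
    intro h hh
    have heq : (fun z => ∫⁻ z', α z z' * h z' ∂(prop z))
        = fun z => ∫⁻ z', ENNReal.ofReal (q z.1 z'.1) * (α z z' * h z') ∂(lam.compProd M) :=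
      funext fun z => hpropInt z _ ((hα_right z).mul hh)
    rw [heq]
    exact Measurable.lintegral_prod_right'
      ((hqm2.ennreal_ofReal).mul (hαm.mul (hh.comp measurable_snd)))
  have hrm : Measurable fun z => ∫⁻ z', α z z' ∂(prop z) := by
    have := hPm (fun _ => 1) measurable_const
    simpa only [mul_one] using this
  have hKm : ∀ (F : Θ × ℝ≥0 → ℝ≥0∞), Measurable F →
      Measurable fun z => ∫⁻ z', F z' ∂(K z) := by
    intro F hF
    have heq : (fun z => ∫⁻ z', F z' ∂(K z)) = fun z =>
        (∫⁻ z', α z z' * F z' ∂(prop z)) + (1 - ∫⁻ z', α z z' ∂(prop z)) * F z :=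
      funext fun z => hKInt z F hF
    rw [heq]
    exact (hPm F hF).add ((measurable_const.sub hrm).mul hF)
  -- double integral representation
  have hE : ∀ (g h : Θ × ℝ≥0 → ℝ≥0∞), Measurable g → Measurable h →
      ∫⁻ z, g z * ∫⁻ z', α z z' * h z' ∂(prop z) ∂πt
        = ∫⁻ z, ∫⁻ z', (ENNReal.ofReal (f z.1 * (z.2 : ℝ) * q z.1 z'.1) * α z z')
            * g z * h z' ∂(lam.compProd M) ∂(lam.compProd M) := by
    intro g h hg hh
    rw [hπtInt (fun z => g z * ∫⁻ z', α z z' * h z' ∂(prop z)) (hg.mul (hPm h hh))]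
    refine lintegral_congr fun z => ?_
    rw [hpropInt z (fun z' => α z z' * h z') ((hα_right z).mul hh)]
    have hin : Measurable fun z' : Θ × ℝ≥0 =>
        ENNReal.ofReal (q z.1 z'.1) * (α z z' * h z') :=
      ((hqm.comp (measurable_const.prodMk measurable_fst)).ennreal_ofReal).mul
        ((hα_right z).mul hh)
    rw [show (ENNReal.ofReal (f z.1) * (z.2 : ℝ≥0∞))
          * (g z * ∫⁻ z', ENNReal.ofReal (q z.1 z'.1) * (α z z' * h z') ∂(lam.compProd M))
        = ((ENNReal.ofReal (f z.1) * (z.2 : ℝ≥0∞)) * g z)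
          * ∫⁻ z', ENNReal.ofReal (q z.1 z'.1) * (α z z' * h z') ∂(lam.compProd M) from by
        ring,
      ← lintegral_const_mul _ hin]
    refine lintegral_congr fun z' => ?_
    rw [ENNReal.ofReal_mul (mul_nonneg (hf0 _) z.2.coe_nonneg), ENNReal.ofReal_mul (hf0 _),
      ENNReal.ofReal_coe_nnreal]
    ring
  -- the key reversibility identity for the continuous part
  have hkey : ∀ (g h : Θ × ℝ≥0 → ℝ≥0∞), Measurable g → Measurable h →
      ∫⁻ z, g z * ∫⁻ z', α z z' * h z' ∂(prop z) ∂πt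
        = ∫⁻ z, h z * ∫⁻ z', α z z' * g z' ∂(prop z) ∂πt := by
    intro g h hg hh
    rw [hE g h hg hh, hE h g hh hg]
    have hDm : Measurable fun p : (Θ × ℝ≥0) × (Θ × ℝ≥0) =>
        (ENNReal.ofReal (f p.1.1 * (p.1.2 : ℝ) * q p.1.1 p.2.1) * α p.1 p.2)
          * g p.1 * h p.2 :=
      ((hem.ennreal_ofReal.mul hαm).mul (hg.comp measurable_fst)).mul (hh.comp measurable_snd)
    rw [lintegral_lintegral_swap hDm.aemeasurable]
    refine lintegral_congr fun y => lintegral_congr fun x => ?_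
    rw [hDsym x y]
    ring
  -- full reversibility in lintegral form
  have hSym : ∀ (g h : Θ × ℝ≥0 → ℝ≥0∞), Measurable g → Measurable h →
      ∫⁻ z, g z * ∫⁻ z', h z' ∂(K z) ∂πt = ∫⁻ z, h z * ∫⁻ z', g z' ∂(K z) ∂πt := by
    have expand : ∀ (g h : Θ × ℝ≥0 → ℝ≥0∞), Measurable g → Measurable h →
        ∫⁻ z, g z * ∫⁻ z', h z' ∂(K z) ∂πt
          = (∫⁻ z, g z * ∫⁻ z', α z z' * h z' ∂(prop z) ∂πt)
            + ∫⁻ z, (1 - ∫⁻ z', α z z' ∂(prop z)) * g z * h z ∂πt := by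
      intro g h hg hh
      have hp : ∀ z, g z * ∫⁻ z', h z' ∂(K z)
          = g z * ∫⁻ z', α z z' * h z' ∂(prop z)
            + (1 - ∫⁻ z', α z z' ∂(prop z)) * g z * h z := fun z => by
        rw [hKInt z h hh]; ring
      rw [lintegral_congr hp, lintegral_add_left (f := fun z => g z * ∫⁻ z', α z z' * h z' ∂(prop z)) (hg.mul (hPm h hh))]
    intro g h hg hh
    rw [expand g h hg hh, expand h g hh hg, hkey g h hg hh]
    congr 1
    exact lintegral_congr fun z => by ring
  -- invariance
  have hInv : ∀ B : Set (Θ × ℝ≥0), MeasurableSet B → ∫⁻ z, K z B ∂πt = πt B := by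
    intro B hB
    have hInd : Measurable (B.indicator (1 : (Θ × ℝ≥0) → ℝ≥0∞)) := measurable_one.indicator hB
    have h1 : ∀ z, K z B = ∫⁻ z', α z z' * B.indicator 1 z' ∂(prop z)
        + (1 - ∫⁻ z', α z z' ∂(prop z)) * B.indicator 1 z := fun z => by
      rw [← lintegral_indicator_one hB, hKInt z _ hInd]
    have h2 : ∫⁻ z, ∫⁻ z', α z z' * B.indicator 1 z' ∂(prop z) ∂πt
        = ∫⁻ z, B.indicator 1 z * ∫⁻ z', α z z' ∂(prop z) ∂πt := by
      have := hkey (fun _ => 1) (B.indicator 1) measurable_const hInd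
      simpa only [one_mul, mul_one] using this
    have h3 : ∀ z, B.indicator (1 : (Θ × ℝ≥0) → ℝ≥0∞) z * (∫⁻ z', α z z' ∂(prop z))
        + (1 - ∫⁻ z', α z z' ∂(prop z)) * B.indicator 1 z = B.indicator 1 z := by
      intro z
      rw [mul_comm (1 - ∫⁻ z', α z z' ∂(prop z)) (B.indicator 1 z), ← mul_add,
        add_tsub_cancel_of_le (hr1 z), mul_one]
    rw [lintegral_congr h1, lintegral_add_left (hPm _ hInd), h2,
      ← lintegral_add_left (f := fun z => B.indicator 1 z * ∫⁻ z', α z z' ∂(prop z)) (hInd.mul hrm), lintegral_congr h3, lintegral_indicator_one hB]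
  -- πt is a probability measure
  have hπtuniv : πt Set.univ = 1 := by
    calc πt Set.univ = ∫⁻ _, (1 : ℝ≥0∞) ∂πt := lintegral_one.symm
      _ = ∫⁻ z, (ENNReal.ofReal (f z.1) * (z.2 : ℝ≥0∞)) * 1 ∂(lam.compProd M) :=
          hπtInt _ measurable_const
      _ = ∫⁻ θ, ∫⁻ w, (ENNReal.ofReal (f θ) * (w : ℝ≥0∞)) * 1 ∂M θ ∂lam :=
          Measure.lintegral_compProd (hρm.mul measurable_const)
      _ = ∫⁻ θ, ENNReal.ofReal (f θ) ∂lam := lintegral_congr fun θ => by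
          simp only [mul_one]
          rw [lintegral_const_mul _ measurable_coe_nnreal_ennreal, hM θ, mul_one]
      _ = π Set.univ := by rw [hπ, withDensity_apply _ MeasurableSet.univ, setLIntegral_univ]
      _ = 1 := measure_univ
  -- marginal
  have hMarg : πt.map Prod.fst = π := by
    ext A hA
    rw [Measure.map_apply measurable_fst hA]
    have hpre : MeasurableSet (Prod.fst ⁻¹' A : Set (Θ × ℝ≥0)) := measurable_fst hA
    have hIndm : Measurable ((Prod.fst ⁻¹' A).indicator (1 : (Θ × ℝ≥0) → ℝ≥0∞)) :=
      measurable_one.indicator hpre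
    have hpt : ∀ θ, ∫⁻ w, (ENNReal.ofReal (f θ) * (w : ℝ≥0∞))
          * (Prod.fst ⁻¹' A).indicator 1 (θ, w) ∂M θ
        = A.indicator (fun θ => ENNReal.ofReal (f θ)) θ := by
      intro θ
      by_cases hθ : θ ∈ A
      · have hw : ∀ w : ℝ≥0,
            (Prod.fst ⁻¹' A).indicator (1 : (Θ × ℝ≥0) → ℝ≥0∞) (θ, w) = 1 := fun w =>
          Set.indicator_of_mem (by simpa using hθ) 1
        simp only [hw, mul_one, Set.indicator_of_mem hθ]
        rw [lintegral_const_mul _ measurable_coe_nnreal_ennreal, hM θ, mul_one]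
      · have hw : ∀ w : ℝ≥0,
            (Prod.fst ⁻¹' A).indicator (1 : (Θ × ℝ≥0) → ℝ≥0∞) (θ, w) = 0 := fun w =>
          Set.indicator_of_notMem (by simpa using hθ) 1
        simp [hw, Set.indicator_of_notMem hθ]
    calc πt (Prod.fst ⁻¹' A)
        = ∫⁻ z, (Prod.fst ⁻¹' A).indicator 1 z ∂πt := (lintegral_indicator_one hpre).symm
      _ = ∫⁻ z, (ENNReal.ofReal (f z.1) * (z.2 : ℝ≥0∞))
            * (Prod.fst ⁻¹' A).indicator 1 z ∂(lam.compProd M) := hπtInt _ hIndm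
      _ = ∫⁻ θ, ∫⁻ w, (ENNReal.ofReal (f θ) * (w : ℝ≥0∞))
            * (Prod.fst ⁻¹' A).indicator 1 (θ, w) ∂M θ ∂lam :=
          Measure.lintegral_compProd (hρm.mul hIndm)
      _ = ∫⁻ θ, A.indicator (fun θ => ENNReal.ofReal (f θ)) θ ∂lam := lintegral_congr hpt
      _ = ∫⁻ θ in A, ENNReal.ofReal (f θ) ∂lam := lintegral_indicator hA _
      _ = π A := (hπ ▸ (withDensity_apply _ hA)).symm

  haveI : IsProbabilityMeasure πt := ⟨hπtuniv⟩
  refine ⟨⟨hπtuniv⟩, hMarg, ?_, hInv⟩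
  intro φ ψ hφ hψ Cφ Cψ hCφ hCψ
  -- K z is a finite measure, of total mass at most 2
  have hKuniv : ∀ z, K z Set.univ ≤ 2 := by
    intro z
    rw [hK]
    dsimp only
    rw [Measure.add_apply, Measure.smul_apply, smul_eq_mul]
    have h1 : (prop z).withDensity (α z) Set.univ ≤ 1 := by
      rw [withDensity_apply _ MeasurableSet.univ, setLIntegral_univ]
      exact hr1 z
    have h2 : (1 - ∫⁻ z', α z z' ∂(prop z)) * Measure.dirac z Set.univ ≤ 1 := by
      rw [measure_univ, mul_one]
      exact tsub_le_self
    calc (prop z).withDensity (α z) Set.univ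
          + (1 - ∫⁻ z', α z z' ∂(prop z)) * Measure.dirac z Set.univ
        ≤ (1 : ℝ≥0∞) + 1 := add_le_add h1 h2
      _ = 2 := one_add_one_eq_two
  have hKfinI : ∀ z, IsFiniteMeasure (K z) := fun z =>
    ⟨lt_of_le_of_lt (hKuniv z) (by norm_num)⟩
  have hKre : ∀ z, (K z Set.univ).toReal ≤ 2 := by
    intro z
    refine ENNReal.toReal_le_of_le_ofReal (by norm_num) ?_
    calc K z Set.univ ≤ 2 := hKuniv z
      _ = ENNReal.ofReal 2 := by norm_num
  -- integrability of bounded measurable functions w.r.t. K z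
  have hIntK : ∀ (u : Θ × ℝ≥0 → ℝ), Measurable u → ∀ C : ℝ, (∀ z', |u z'| ≤ C) →
      ∀ z, Integrable u (K z) := by
    intro u hu C hC z
    haveI := hKfinI z
    exact (integrable_const C).mono' hu.aestronglyMeasurable
      (Filter.Eventually.of_forall fun z' => by simpa [Real.norm_eq_abs] using hC z')
  have hIval : ∀ (u : Θ × ℝ≥0 → ℝ), Measurable u → (∀ z', 0 ≤ u z') → ∀ z,
      ∫ z', u z' ∂(K z) = (∫⁻ z', ENNReal.ofReal (u z') ∂(K z)).toReal := fun u hu hu0 z =>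
    integral_eq_lintegral_of_nonneg_ae (Filter.Eventually.of_forall hu0) hu.aestronglyMeasurable
  have hLfin : ∀ (u : Θ × ℝ≥0 → ℝ) (C : ℝ), (∀ z', u z' ≤ C) → ∀ z,
      ∫⁻ z', ENNReal.ofReal (u z') ∂(K z) ≤ ENNReal.ofReal C * 2 := by
    intro u C hC z
    calc ∫⁻ z', ENNReal.ofReal (u z') ∂(K z) ≤ ∫⁻ _, ENNReal.ofReal C ∂(K z) :=
        lintegral_mono fun z' => ENNReal.ofReal_le_ofReal (hC z')
      _ = ENNReal.ofReal C * K z Set.univ := lintegral_const _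
      _ ≤ ENNReal.ofReal C * 2 := mul_le_mul_right (hKuniv z) _
  -- for nonnegative bounded integrands, the Bochner integral is a toReal of a lintegral
  have hTnn : ∀ (u v : Θ × ℝ≥0 → ℝ), Measurable u → Measurable v →
      (∀ z, 0 ≤ u z) → (∀ z, 0 ≤ v z) → ∀ Cv : ℝ, (∀ z, v z ≤ Cv) →
      ∫ z, u z * ∫ z', v z' ∂(K z) ∂πt
        = (∫⁻ z, ENNReal.ofReal (u z) * ∫⁻ z', ENNReal.ofReal (v z') ∂(K z) ∂πt).toReal := by
    intro u v hu hv hu0 hv0 Cv hCv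
    have hΛm : Measurable fun z => ∫⁻ z', ENNReal.ofReal (v z') ∂(K z) :=
      hKm _ hv.ennreal_ofReal
    have h1 : (fun z => u z * ∫ z', v z' ∂(K z))
        = fun z => u z * (∫⁻ z', ENNReal.ofReal (v z') ∂(K z)).toReal :=
      funext fun z => by rw [hIval v hv hv0 z]
    rw [h1, integral_eq_lintegral_of_nonneg_ae
      (Filter.Eventually.of_forall fun z => mul_nonneg (hu0 z) ENNReal.toReal_nonneg)
      (hu.mul hΛm.ennreal_toReal).aestronglyMeasurable]
    congr 1
    refine lintegral_congr fun z => ?_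
    rw [ENNReal.ofReal_mul (hu0 z), ENNReal.ofReal_toReal]
    exact ne_of_lt (lt_of_le_of_lt (hLfin v Cv hCv z)
      (ENNReal.mul_lt_top ENNReal.ofReal_lt_top (by norm_num)))
  -- reversibility for nonnegative bounded integrands
  have hTsym : ∀ (u v : Θ × ℝ≥0 → ℝ), Measurable u → Measurable v →
      (∀ z, 0 ≤ u z) → (∀ z, 0 ≤ v z) → ∀ Cu Cv : ℝ, (∀ z, u z ≤ Cu) → (∀ z, v z ≤ Cv) →
      ∫ z, u z * ∫ z', v z' ∂(K z) ∂πt = ∫ z, v z * ∫ z', u z' ∂(K z) ∂πt := by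
    intro u v hu hv hu0 hv0 Cu Cv hCu hCv
    rw [hTnn u v hu hv hu0 hv0 Cv hCv, hTnn v u hv hu hv0 hu0 Cu hCu,
      hSym (fun z => ENNReal.ofReal (u z)) (fun z => ENNReal.ofReal (v z))
        hu.ennreal_ofReal hv.ennreal_ofReal]
  -- decomposition into positive and negative parts
  have hdecomp : ∀ x : ℝ, x = max x 0 - max (-x) 0 := by
    intro x
    rcases le_total x 0 with h | h
    · rw [max_eq_right h, max_eq_left (neg_nonneg.mpr h)]; ring
    · rw [max_eq_left h, max_eq_right (neg_nonpos.mpr h)]; ring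
  have hmax1 : ∀ (w : Θ × ℝ≥0 → ℝ) (C : ℝ), (∀ z, |w z| ≤ C) →
      ∀ z, max (w z) 0 ≤ max C 0 :=
    fun w C hC z => max_le_max (le_trans (le_abs_self _) (hC z)) le_rfl
  have hmax2 : ∀ (w : Θ × ℝ≥0 → ℝ) (C : ℝ), (∀ z, |w z| ≤ C) →
      ∀ z, max (-w z) 0 ≤ max C 0 :=
    fun w C hC z => max_le_max (le_trans (neg_le_abs _) (hC z)) le_rfl
  -- integrability over πt of the bilinear products
  have hint : ∀ (a b : Θ × ℝ≥0 → ℝ), Measurable a → Measurable b →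
      (∀ z, 0 ≤ a z) → (∀ z, 0 ≤ b z) → ∀ Ca Cb : ℝ, (∀ z, a z ≤ Ca) → (∀ z, b z ≤ Cb) →
      Integrable (fun z => a z * ∫ z', b z' ∂(K z)) πt := by
    intro a b ha hb ha0 hb0 Ca Cb hCa hCb
    have hIm : Measurable fun z => ∫ z', b z' ∂(K z) := by
      have h : (fun z => ∫ z', b z' ∂(K z))
          = fun z => (∫⁻ z', ENNReal.ofReal (b z') ∂(K z)).toReal :=
        funext fun z => hIval b hb hb0 z
      rw [h]
      exact (hKm _ hb.ennreal_ofReal).ennreal_toReal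
    have hbnd : ∀ z, ‖a z * ∫ z', b z' ∂(K z)‖ ≤ Ca * (Cb * 2) := by
      intro z
      haveI := hKfinI z
      have hCb0 : 0 ≤ Cb := le_trans (hb0 z) (hCb z)
      have hCa0 : 0 ≤ Ca := le_trans (ha0 z) (hCa z)
      have hI0 : 0 ≤ ∫ z', b z' ∂(K z) := integral_nonneg hb0
      have hIle : ∫ z', b z' ∂(K z) ≤ Cb * 2 := by
        calc ∫ z', b z' ∂(K z) ≤ ∫ _, Cb ∂(K z) :=
            integral_mono
              (hIntK b hb Cb (fun z' => by rw [abs_of_nonneg (hb0 z')]; exact hCb z') z)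
              (integrable_const Cb) hCb
          _ = (K z Set.univ).toReal • Cb := integral_const Cb
          _ ≤ Cb * 2 := by
              rw [smul_eq_mul, mul_comm]
              exact mul_le_mul_of_nonneg_left (hKre z) hCb0
      rw [Real.norm_eq_abs, abs_mul, abs_of_nonneg (ha0 z), abs_of_nonneg hI0]
      exact mul_le_mul (hCa z) hIle hI0 hCa0
    exact (integrable_const (Ca * (Cb * 2))).mono'
      ((ha.mul hIm).aestronglyMeasurable) (Filter.Eventually.of_forall hbnd)
  -- bilinear expansion of the reversibility integral
  have hexpand : ∀ (u v : Θ × ℝ≥0 → ℝ), Measurable u → Measurable v →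
      ∀ Cu Cv : ℝ, (∀ z, |u z| ≤ Cu) → (∀ z, |v z| ≤ Cv) →
      ∫ z, u z * ∫ z', v z' ∂(K z) ∂πt
        = ((∫ z, max (u z) 0 * ∫ z', max (v z') 0 ∂(K z) ∂πt)
           + ∫ z, max (-u z) 0 * ∫ z', max (-v z') 0 ∂(K z) ∂πt)
          - ((∫ z, max (u z) 0 * ∫ z', max (-v z') 0 ∂(K z) ∂πt)
           + ∫ z, max (-u z) 0 * ∫ z', max (v z') 0 ∂(K z) ∂πt) := by
    intro u v hu hv Cu Cv hCu hCv
    have hu1m : Measurable fun z => max (u z) 0 := hu.max measurable_const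
    have hu2m : Measurable fun z => max (-u z) 0 := hu.neg.max measurable_const
    have hv1m : Measurable fun z => max (v z) 0 := hv.max measurable_const
    have hv2m : Measurable fun z => max (-v z) 0 := hv.neg.max measurable_const
    have hv1abs : ∀ z, |max (v z) 0| ≤ max Cv 0 := fun z => by
      rw [abs_of_nonneg (le_max_right _ _)]; exact hmax1 v Cv hCv z
    have hv2abs : ∀ z, |max (-v z) 0| ≤ max Cv 0 := fun z => by
      rw [abs_of_nonneg (le_max_right _ _)]; exact hmax2 v Cv hCv z
    have hsplit : ∀ z, ∫ z', v z' ∂(K z)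
        = (∫ z', max (v z') 0 ∂(K z)) - ∫ z', max (-v z') 0 ∂(K z) := by
      intro z
      haveI := hKfinI z
      rw [← integral_sub (hIntK _ hv1m _ hv1abs z) (hIntK _ hv2m _ hv2abs z)]
      exact integral_congr_ae (Filter.Eventually.of_forall fun z' => hdecomp (v z'))
    have h11 := hint _ _ hu1m hv1m (fun z => le_max_right _ _) (fun z => le_max_right _ _)
      _ _ (hmax1 u Cu hCu) (hmax1 v Cv hCv)
    have h22 := hint _ _ hu2m hv2m (fun z => le_max_right _ _) (fun z => le_max_right _ _)
      _ _ (hmax2 u Cu hCu) (hmax2 v Cv hCv)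
    have h12 := hint _ _ hu1m hv2m (fun z => le_max_right _ _) (fun z => le_max_right _ _)
      _ _ (hmax1 u Cu hCu) (hmax2 v Cv hCv)
    have h21 := hint _ _ hu2m hv1m (fun z => le_max_right _ _) (fun z => le_max_right _ _)
      _ _ (hmax2 u Cu hCu) (hmax1 v Cv hCv)
    have hpoint : ∀ z, u z * ∫ z', v z' ∂(K z)
        = (max (u z) 0 * ∫ z', max (v z') 0 ∂(K z)
            + max (-u z) 0 * ∫ z', max (-v z') 0 ∂(K z))
          - (max (u z) 0 * ∫ z', max (-v z') 0 ∂(K z)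
            + max (-u z) 0 * ∫ z', max (v z') 0 ∂(K z)) := by
      intro z
      rw [hsplit z]
      nth_rewrite 1 [hdecomp (u z)]
      ring
    have H1 : Integrable (fun z => max (u z) 0 * ∫ z', max (v z') 0 ∂(K z)
        + max (-u z) 0 * ∫ z', max (-v z') 0 ∂(K z)) πt := h11.add h22
    have H2 : Integrable (fun z => max (u z) 0 * ∫ z', max (-v z') 0 ∂(K z)
        + max (-u z) 0 * ∫ z', max (v z') 0 ∂(K z)) πt := h12.add h21
    rw [integral_congr_ae (Filter.Eventually.of_forall hpoint),
      integral_sub H1 H2, integral_add h11 h22, integral_add h12 h21]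
  -- put everything together
  rw [hexpand φ ψ hφ hψ Cφ Cψ hCφ hCψ, hexpand ψ φ hψ hφ Cψ Cφ hCψ hCφ,
    hTsym _ _ (hφ.max measurable_const) (hψ.max measurable_const)
      (fun z => le_max_right _ _) (fun z => le_max_right _ _)
      _ _ (hmax1 φ Cφ hCφ) (hmax1 ψ Cψ hCψ),
    hTsym (fun z => max (-φ z) 0) (fun z => max (-ψ z) 0) (hφ.neg.max measurable_const) (hψ.neg.max measurable_const)
      (fun z => le_max_right _ _) (fun z => le_max_right _ _)
      _ _ (hmax2 φ Cφ hCφ) (hmax2 ψ Cψ hCψ),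
    hTsym _ (fun z => max (-ψ z) 0) (hφ.max measurable_const) (hψ.neg.max measurable_const)
      (fun z => le_max_right _ _) (fun z => le_max_right _ _)
      _ _ (hmax1 φ Cφ hCφ) (hmax2 ψ Cψ hCψ),
    hTsym (fun z => max (-φ z) 0) _ (hφ.neg.max measurable_const) (hψ.max measurable_const)
      (fun z => le_max_right _ _) (fun z => le_max_right _ _)
      _ _ (hmax2 φ Cφ hCφ) (hmax1 ψ Cψ hCψ)]
  ring
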